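/- Let Π = {p}, I = {1}, and S = {p, ⟨1⟩_{≥1} p, ⟨1⟩_{≥1}⟨1⟩_{≥1} p, ...} be the set of formulae asserting p is reachable in exactly n steps for each n ∈ ℕ. Then no countable disjunction of GMML formulae over (Π, I) is logically equivalent to the negation ¬⋁_{φ∈S} φ (i.e., countable disjunctions of GMML formulae are not closed under negation). -/

import Mathlib

/-- Syntax of graded multimodal logic over propositions `P` and indices `I`. -/
inductive GMML (P : Type) (I : Type) : Type
  | top : GMML P I
  | prop : P → GMML P I
  | neg : GMML P I → GMML P I
  | and : GMML P I → GMML P I → GMML P I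
  | dia : I → ℕ → GMML P I → GMML P I

/-- Satisfaction of a GMML formula at a point of a Kripke model. -/
def GMML.Sat {P I W : Type} (R : I → W → W → Prop) (V : P → W → Prop) :
    W → GMML P I → Prop
  | _, .top => True
  | w, .prop p => V p w
  | w, .neg φ => ¬ GMML.Sat R V w φ
  | w, .and φ ψ => GMML.Sat R V w φ ∧ GMML.Sat R V w ψ
  | w, .dia α k φ => k ≤ {v | R α w v ∧ GMML.Sat R V v φ}.ncard

/-- Modal depth of a GMML formula. -/
def GMML.md {P I : Type} : GMML P I → ℕ
  | .top => 0
  | .prop _ => 0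
  | .neg φ => φ.md
  | .and φ ψ => max φ.md ψ.md
  | .dia _ _ φ => φ.md + 1

/-- A finite pointed Kripke model of vocabulary `(P, I)`. -/
structure PKModel (P I : Type) where
  W : Type
  fin : Finite W
  R : I → W → W → Prop
  V : P → W → Prop
  pt : W

/-- Satisfaction at the distinguished point of a pointed model. -/
def PKModel.Sat {P I : Type} (M : PKModel P I) (φ : GMML P I) : Prop :=
  GMML.Sat M.R M.V M.pt φ

/-- The formula `⟨1⟩_{≥1}^n p`, asserting that `p` is reachable in exactly `n` steps. -/
def reach : ℕ → GMML Unit Unit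
  | 0 => .prop ()
  | n + 1 => .dia () 1 (reach n)

section Aux

/-- Relation and valuation of a single reflexive point where `p` is false. -/
def Rloop : Unit → Unit → Unit → Prop := fun _ _ _ => True
def Vloop : Unit → Unit → Prop := fun _ _ => False

/-- A single reflexive point where `p` is false. -/
def loopModel : PKModel Unit Unit := ⟨Unit, inferInstance, Rloop, Vloop, ()⟩

/-- Relation and valuation of a chain `0 → 1 → ⋯ → d+1` with `p` only at the end. -/
def Rchain (d : ℕ) : Unit → Fin (d + 2) → Fin (d + 2) → Prop :=
  fun _ i j => (j : ℕ) = (i : ℕ) + 1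
def Vchain (d : ℕ) : Unit → Fin (d + 2) → Prop := fun _ i => (i : ℕ) = d + 1

def chainModel (d : ℕ) : PKModel Unit Unit :=
  ⟨Fin (d + 2), inferInstance, Rchain d, Vchain d, ⟨0, by omega⟩⟩

lemma loop_not_reach : ∀ n : ℕ, ¬ GMML.Sat Rloop Vloop () (reach n) := by
  intro n
  induction n with
  | zero => simp [reach, GMML.Sat, Vloop]
  | succ n ih =>
    simp only [reach, GMML.Sat]
    have h : {v | Rloop () () v ∧ GMML.Sat Rloop Vloop v (reach n)} = (∅ : Set Unit) := by
      ext v; cases v; simp [ih]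
    rw [h]
    simp

lemma chain_reach (d : ℕ) : ∀ n : ℕ, ∀ i : Fin (d + 2), (i : ℕ) + n = d + 1 →
    GMML.Sat (Rchain d) (Vchain d) i (reach n) := by
  intro n
  induction n with
  | zero =>
    intro i hi
    simpa [reach, GMML.Sat, Vchain] using hi
  | succ n ih =>
    intro i hi
    simp only [reach, GMML.Sat]
    have hlt : (i : ℕ) + 1 < d + 2 := by omega
    have hmem : (⟨(i : ℕ) + 1, hlt⟩ : Fin (d + 2)) ∈
        {v | Rchain d () i v ∧ GMML.Sat (Rchain d) (Vchain d) v (reach n)} := by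
      refine ⟨rfl, ih _ ?_⟩
      simp; omega
    have := (Set.ncard_pos (Set.toFinite _)).mpr ⟨_, hmem⟩
    omega

lemma transfer (d : ℕ) (ψ : GMML Unit Unit) : ∀ i : Fin (d + 2), (i : ℕ) + ψ.md ≤ d →
    (GMML.Sat (Rchain d) (Vchain d) i ψ ↔ GMML.Sat Rloop Vloop () ψ) := by
  induction ψ with
  | top => intro i hi; simp [GMML.Sat]
  | prop p =>
    intro i hi
    simp only [GMML.md, Nat.add_zero] at hi
    simp only [GMML.Sat, Vchain, Vloop]
    constructor
    · intro h; omega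
    · intro h; exact h.elim
  | neg φ ih =>
    intro i hi
    simp only [GMML.md] at hi
    simp only [GMML.Sat]
    exact not_congr (ih i hi)
  | and φ χ ihφ ihχ =>
    intro i hi
    simp only [GMML.md] at hi
    simp only [GMML.Sat]
    exact and_congr (ihφ i (by omega)) (ihχ i (by omega))
  | dia α k φ ih =>
    intro i hi
    simp only [GMML.md] at hi
    simp only [GMML.Sat]
    have hlt : (i : ℕ) + 1 < d + 2 := by omega
    have hih := ih ⟨(i : ℕ) + 1, hlt⟩ (by simp; omega)
    by_cases h : GMML.Sat Rloop Vloop () φ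
    · have h1 : {v | Rchain d α i v ∧ GMML.Sat (Rchain d) (Vchain d) v φ}
          = {(⟨(i : ℕ) + 1, hlt⟩ : Fin (d + 2))} := by
        ext v
        simp only [Set.mem_setOf_eq, Set.mem_singleton_iff]
        constructor
        · rintro ⟨hv, -⟩
          exact Fin.ext hv
        · rintro rfl
          exact ⟨rfl, hih.mpr h⟩
      have h2 : {v : Unit | Rloop α () v ∧ GMML.Sat Rloop Vloop v φ} = {()} := by
        ext v; cases v; simpa [Rloop] using h
      rw [h1, h2, Set.ncard_singleton, Set.ncard_singleton]
    · have h1 : {v | Rchain d α i v ∧ GMML.Sat (Rchain d) (Vchain d) v φ}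
          = (∅ : Set (Fin (d + 2))) := by
        ext v
        simp only [Set.mem_setOf_eq, Set.mem_empty_iff_false, iff_false, not_and]
        intro hv
        have hv' : v = (⟨(i : ℕ) + 1, hlt⟩ : Fin (d + 2)) := Fin.ext hv
        subst hv'
        exact fun hs => h (hih.mp hs)
      have h2 : {v : Unit | Rloop α () v ∧ GMML.Sat Rloop Vloop v φ} = (∅ : Set Unit) := by
        ext v; cases v; simp [h]
      rw [h1, h2]
      simp

end Aux

/-- no countable disjunction of GMML formulae over `Π = {p}`, `I = {1}` is
logically equivalent (over finite pointed models) to the negation of the disjunction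
`⋁_n reach n` expressing reachability of `p`. -/
theorem disjunctions_not_closed_under_negation :
    ¬ ∃ S : Set (GMML Unit Unit), S.Countable ∧
      ∀ M : PKModel Unit Unit,
        (∃ φ ∈ S, M.Sat φ) ↔ ¬ (∃ n : ℕ, M.Sat (reach n)) := by
  rintro ⟨S, -, hS⟩
  obtain ⟨φ, hφS, hφ⟩ := (hS loopModel).mpr (by
    rintro ⟨n, hn⟩
    exact loop_not_reach n hn)
  set d := φ.md with hd
  have hreach : ∃ n : ℕ, (chainModel d).Sat (reach n) :=
    ⟨d + 1, chain_reach d (d + 1) (chainModel d).pt (by simp [chainModel])⟩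
  have hsat : (chainModel d).Sat φ :=
    (transfer d φ (chainModel d).pt (by simp [chainModel]; exact hd.ge)).mpr hφ
  exact ((hS (chainModel d)).mp ⟨φ, hφS, hsat⟩) hreach
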